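/- Let M be a K{φ,ρ}-module. Then the set M_{tor,φ} of φ-torsion elements of M is a K-subspace of M which is closed under both F and S (i.e., it is a K{φ,ρ}-submodule of M), and the same holds for the set M_{tor,ρ} of ρ-torsion elements. -/

import Mathlib

section Aux

variable {K : Type} [Field K] {M : Type} [AddCommGroup M] [Module K M]

private lemma iterMapZero (A : M →+ M) (i : ℕ) : A^[i] (0 : M) = 0 :=
  Function.iterate_fixed (map_zero A) i

private lemma iterSmul (γ : K →+* K) (A : M →+ M)
    (hA : ∀ (x : K) (m : M), A (x • m) = γ x • A m) (i : ℕ) (x : K) (m : M) :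
    A^[i] (x • m) = (⇑γ)^[i] x • A^[i] m := by
  induction i with
  | zero => rfl
  | succ n ih =>
    rw [Function.iterate_succ_apply', ih, hA]
    simp [Function.iterate_succ_apply']

private lemma iterComm (A B : M →+ M) (hAB : ∀ m, B (A m) = A (B m)) (i : ℕ) (m : M) :
    A^[i] (B m) = B (A^[i] m) := by
  induction i with
  | zero => rfl
  | succ n ih =>
    rw [Function.iterate_succ_apply', Function.iterate_succ_apply', ih, hAB]

private lemma iterNeZero (γ : K →+* K) (i : ℕ) {x : K} (hx : x ≠ 0) : (⇑γ)^[i] x ≠ 0 := by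
  induction i with
  | zero => exact hx
  | succ n ih =>
    rw [Function.iterate_succ_apply']
    exact fun h => ih (γ.injective (h.trans (map_zero γ).symm))

/-- The torsion predicate. -/
private def Tor (A : M →+ M) (m : M) : Prop :=
  ∃ c : ℕ →₀ K, c ≠ 0 ∧ (c.sum fun i x => x • A^[i] m) = 0

private lemma torZero (A : M →+ M) : Tor (K := K) A (0 : M) := by
  refine ⟨Finsupp.single 0 1, fun h => one_ne_zero (Finsupp.single_eq_zero.mp h), ?_⟩
  rw [Finsupp.sum_single_index (by simp)]
  simp [iterMapZero]

private lemma torSmul (γ : K →+* K) (A : M →+ M)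
    (hA : ∀ (x : K) (m : M), A (x • m) = γ x • A m) (x : K) {m : M}
    (hm : Tor (K := K) A m) : Tor (K := K) A (x • m) := by
  rcases eq_or_ne x 0 with rfl | hx
  · simpa using torZero (K := K) A
  obtain ⟨c, hc, hsum⟩ := hm
  refine ⟨Finsupp.onFinset c.support (fun i => c i * ((⇑γ)^[i] x)⁻¹)
      (fun i hi => Finsupp.mem_support_iff.mpr (left_ne_zero_of_mul hi)), ?_, ?_⟩
  · obtain ⟨i, hi⟩ := Finsupp.ne_iff.mp hc
    simp only [Finsupp.coe_zero, Pi.zero_apply] at hi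
    refine Finsupp.ne_iff.mpr ⟨i, ?_⟩
    simp only [Finsupp.onFinset_apply, Finsupp.coe_zero, Pi.zero_apply]
    exact mul_ne_zero hi (inv_ne_zero (iterNeZero γ i hx))
  · rw [Finsupp.onFinset_sum _ (g := fun i y => y • A^[i] (x • m)) (fun a => zero_smul K _)]
    have : ∀ i ∈ c.support,
        (c i * ((⇑γ)^[i] x)⁻¹) • A^[i] (x • m) = c i • A^[i] m := by
      intro i _
      rw [iterSmul γ A hA, smul_smul, mul_assoc,
        inv_mul_cancel₀ (iterNeZero γ i hx), mul_one]
    rw [Finset.sum_congr rfl this]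
    exact hsum

/-- Torsion is preserved by a commuting semilinear operator. -/
private lemma torMap (γ' : K →+* K) (A B : M →+ M)
    (hB : ∀ (x : K) (m : M), B (x • m) = γ' x • B m)
    (hAB : ∀ m, B (A m) = A (B m)) {m : M}
    (hm : Tor (K := K) A m) : Tor (K := K) A (B m) := by
  obtain ⟨c, hc, hsum⟩ := hm
  refine ⟨c.mapRange γ' (map_zero γ'), ?_, ?_⟩
  · obtain ⟨i, hi⟩ := Finsupp.ne_iff.mp hc
    simp only [Finsupp.coe_zero, Pi.zero_apply] at hi
    refine Finsupp.ne_iff.mpr ⟨i, ?_⟩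
    simp only [Finsupp.mapRange_apply, Finsupp.coe_zero, Pi.zero_apply]
    exact fun h => hi (γ'.injective (h.trans (map_zero γ').symm))
  · rw [Finsupp.sum_mapRange_index (h := fun i y => y • A^[i] (B m)) (fun i => zero_smul K _)]
    have : (c.sum fun i y => γ' y • A^[i] (B m)) = B (c.sum fun i y => y • A^[i] m) := by
      rw [map_finsuppSum]
      refine Finsupp.sum_congr fun i _ => ?_
      rw [hB, iterComm A B hAB]
    rw [this, hsum, map_zero]

private lemma torOfFD (A : M →+ M) {m : M} (V : Submodule K M)
    (hfd : FiniteDimensional K V) (hst : ∀ v ∈ V, A v ∈ V) (hm : m ∈ V) :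
    Tor (K := K) A m := by
  haveI := hfd
  set d := Module.finrank K V with hd
  have hmem : ∀ i, A^[i] m ∈ V := by
    intro i
    induction i with
    | zero => exact hm
    | succ n ih => rw [Function.iterate_succ_apply']; exact hst _ ih
  set w : Fin (d + 1) → V := fun i => ⟨A^[(i : ℕ)] m, hmem i⟩ with hw
  have hnli : ¬ LinearIndependent K w := by
    intro h
    have := h.fintype_card_le_finrank
    simp only [Fintype.card_fin] at this
    omega
  obtain ⟨g, hg0, i0, hi0⟩ := Fintype.not_linearIndependent_iff.mp hnli
  have hsum : ∑ i : Fin (d + 1), g i • A^[(i : ℕ)] m = 0 := by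
    have := congrArg (Subtype.val : V → M) hg0
    simpa [hw] using this
  have hfsupp : ∀ j, (if h : j < d + 1 then g ⟨j, h⟩ else 0) ≠ 0 → j ∈ Finset.range (d + 1) :=
    fun j hj => Finset.mem_range.mpr (by by_contra hh; simp [hh] at hj)
  refine ⟨Finsupp.onFinset (Finset.range (d + 1))
      (fun j => if h : j < d + 1 then g ⟨j, h⟩ else 0) hfsupp, ?_, ?_⟩
  · refine Finsupp.ne_iff.mpr ⟨(i0 : ℕ), ?_⟩
    simpa [i0.isLt, Fin.is_le] using hi0
  · have h1 : ((Finsupp.onFinset (Finset.range (d + 1))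
        (fun j => if h : j < d + 1 then g ⟨j, h⟩ else 0) hfsupp).sum
          fun i x => x • (⇑A)^[i] m)
        = ∑ j ∈ Finset.range (d + 1),
            (if h : j < d + 1 then g ⟨j, h⟩ else 0) • (⇑A)^[j] m :=
      Finsupp.onFinset_sum _ (fun a => zero_smul K _)
    rw [h1, ← Fin.sum_univ_eq_sum_range]
    simpa [Fin.is_le] using hsum

private lemma fdOfTor (γ : K →+* K) (A : M →+ M)
    (hA : ∀ (x : K) (m : M), A (x • m) = γ x • A m) {m : M}
    (hm : Tor (K := K) A m) :
    ∃ V : Submodule K M, FiniteDimensional K V ∧ (∀ v ∈ V, A v ∈ V) ∧ m ∈ V := by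
  obtain ⟨c, hc, hsum⟩ := hm
  have hne : c.support.Nonempty := Finsupp.support_nonempty_iff.mpr hc
  set n := c.support.max' hne with hn
  set s : Set M := Set.range fun i : Fin (n + 1) => A^[(i : ℕ)] m with hs
  set V := Submodule.span K s with hV
  have hgen : ∀ i : ℕ, i ≤ n → A^[i] m ∈ V := fun i hi =>
    Submodule.subset_span ⟨⟨i, Nat.lt_succ_of_le hi⟩, rfl⟩
  -- Applying A to the torsion relation:
  have hrel : (c.sum fun i y => γ y • A^[i + 1] m) = 0 := by
    have := congrArg A hsum
    rw [map_finsuppSum, map_zero] at this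
    rw [← this]
    refine Finsupp.sum_congr fun i _ => ?_
    rw [hA, Function.iterate_succ_apply']
  have hnmem : n ∈ c.support := c.support.max'_mem hne
  have hcn : γ (c n) ≠ 0 :=
    fun h => Finsupp.mem_support_iff.mp hnmem (γ.injective (h.trans (map_zero γ).symm))
  -- A^[n+1] m ∈ V
  have htop : A^[n + 1] m ∈ V := by
    rw [Finsupp.sum, ← Finset.add_sum_erase _ _ hnmem] at hrel
    have h1 : γ (c n) • A^[n + 1] m =
        -∑ i ∈ c.support.erase n, γ (c i) • A^[i + 1] m := by
      linear_combination (norm := module) hrel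
    have h2 : A^[n + 1] m = (γ (c n))⁻¹ • (γ (c n) • A^[n + 1] m) := by
      rw [smul_smul, inv_mul_cancel₀ hcn, one_smul]
    rw [h2, h1]
    refine Submodule.smul_mem _ _ (Submodule.neg_mem _ (Submodule.sum_mem _ fun i hi => ?_))
    refine Submodule.smul_mem _ _ (hgen (i + 1) ?_)
    have hile : i ≤ n := c.support.le_max' i (Finset.mem_of_mem_erase hi)
    have hine : i ≠ n := Finset.ne_of_mem_erase hi
    omega
  have hstab : ∀ v ∈ V, A v ∈ V := by
    intro v hv
    refine Submodule.span_induction ?_ ?_ ?_ ?_ hv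
    · rintro x ⟨i, rfl⟩
      show A ((⇑A)^[(i : ℕ)] m) ∈ V
      rw [← Function.iterate_succ_apply' (⇑A) (i : ℕ) m]
      rcases Nat.lt_or_ge (i : ℕ) n with h | h
      · exact hgen _ (by omega)
      · have : (i : ℕ) = n := by omega
        rw [this]; exact htop
    · rw [map_zero]; exact Submodule.zero_mem V
    · intro a b _ _ ha hb; rw [map_add]; exact Submodule.add_mem V ha hb
    · intro a x _ hx; rw [hA]; exact Submodule.smul_mem V _ hx
  refine ⟨V, ?_, hstab, hgen 0 (Nat.zero_le n)⟩
  · rw [hV, hs]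
    exact FiniteDimensional.span_of_finite K (Set.finite_range _)

private lemma torAdd (γ : K →+* K) (A : M →+ M)
    (hA : ∀ (x : K) (m : M), A (x • m) = γ x • A m) {m m' : M}
    (hm : Tor (K := K) A m) (hm' : Tor (K := K) A m') : Tor (K := K) A (m + m') := by
  obtain ⟨V1, h1, hst1, hmem1⟩ := fdOfTor γ A hA hm
  obtain ⟨V2, h2, hst2, hmem2⟩ := fdOfTor γ A hA hm'
  haveI := h1; haveI := h2
  refine torOfFD A (V1 ⊔ V2) inferInstance ?_
    (Submodule.add_mem _ (Submodule.mem_sup_left hmem1) (Submodule.mem_sup_right hmem2))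
  intro v hv
  obtain ⟨a, ha, b, hb, rfl⟩ := Submodule.mem_sup.mp hv
  rw [map_add]
  exact Submodule.add_mem _ (Submodule.mem_sup_left (hst1 a ha))
    (Submodule.mem_sup_right (hst2 b hb))

private lemma torSubmodule (γ γ' : K →+* K) (A B : M →+ M)
    (hA : ∀ (x : K) (m : M), A (x • m) = γ x • A m)
    (hB : ∀ (x : K) (m : M), B (x • m) = γ' x • B m)
    (hAB : ∀ m, B (A m) = A (B m)) :
    ∃ N : Submodule K M,
      (N : Set M) = {m : M | ∃ c : ℕ →₀ K, c ≠ 0 ∧ (c.sum fun i x => x • A^[i] m) = 0} ∧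
      (∀ m ∈ N, A m ∈ N) ∧ (∀ m ∈ N, B m ∈ N) := by
  refine ⟨{ carrier := {m : M | Tor (K := K) A m}
            add_mem' := fun h h' => torAdd γ A hA h h'
            zero_mem' := torZero A
            smul_mem' := fun x m h => torSmul γ A hA x h }, rfl, ?_, ?_⟩
  · exact fun m h => torMap γ A A hA (fun _ => rfl) h
  · exact fun m h => torMap γ' A B hB hAB h

end Aux

theorem torsion_sets_are_submodules
    {K : Type} [Field K] (γφ γρ : K →+* K)
    (hcomm : ∀ x : K, γφ (γρ x) = γρ (γφ x))
    {M : Type} [AddCommGroup M] [Module K M]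
    (F S : M →+ M)
    (hF : ∀ (x : K) (m : M), F (x • m) = γφ x • F m)
    (hS : ∀ (x : K) (m : M), S (x • m) = γρ x • S m)
    (hFS : ∀ m : M, F (S m) = S (F m)) :
    (∃ N : Submodule K M,
        (N : Set M) =
          {m : M | ∃ c : ℕ →₀ K, c ≠ 0 ∧ (c.sum fun i x => x • F^[i] m) = 0} ∧
        (∀ m ∈ N, F m ∈ N) ∧ (∀ m ∈ N, S m ∈ N)) ∧
    (∃ N : Submodule K M,
        (N : Set M) =
          {m : M | ∃ c : ℕ →₀ K, c ≠ 0 ∧ (c.sum fun i x => x • S^[i] m) = 0} ∧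
        (∀ m ∈ N, F m ∈ N) ∧ (∀ m ∈ N, S m ∈ N)) := by
  constructor
  · exact torSubmodule γφ γρ F S hF hS (fun m => (hFS m).symm)
  · obtain ⟨N, h1, h2, h3⟩ := torSubmodule γρ γφ S F hS hF hFS
    exact ⟨N, h1, h3, h2⟩
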